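/- Let K be a nonempty finite set partitioned into a nonempty subset K_W and a subset K_B, with I_W the associated 0/1 diagonal matrix, let V, R ∈ ℝ^{K×K}, λ > 0 and μ(i) > 0 for i ≥ 1, and assume λ·I_W − V and (λ+μ(i))·I_W − V are invertible for all i ≥ 1. Define W := λ·(λ·I_W − V)^{-1}·I_W, U^{(i,0)} := μ(i)·((λ+μ(i))·I_W − V)^{-1}·I_W, U^{(i,n+1)} := ((λ+μ(i))·I_W − V)^{-1}·λ·I_W·U^{(i+1,n)}, and the block matrices A^{(i,n)} := U^{(i,n)}·R and B^{(n)} := W·U^{(1,n)}·R. Fix c > 0 and set ξ(n) := c·∏_{i=1}^{n} λ/μ(i). If the row vector θ̂ : K → ℝ satisfies θ̂ · λ·(λ·I_W − V)^{-1}·I_W·R = θ̂, then the product-form vector π̂^{(n)} := ξ(n)·θ̂ solves the steady-state equations of the Markov chain embedded at departure epochs: for every n ∈ ℕ₀, ξ(0)·θ̂·B^{(n)} + Σ_{i=1}^{n+1} ξ(i)·θ̂·A^{(i, n−i+1)} = ξ(n)·θ̂. -/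

import Mathlib

/-- If θ̂ satisfies θ̂·λ·(λI_W − V)⁻¹·I_W·R = θ̂, then the product-form
vector π̂^(n) = ξ(n)·θ̂ with ξ(n) = c·∏_{i=1}^n λ/μ(i) solves the steady-state
equations of the Markov chain embedded at departure epochs:
ξ(0)·θ̂·B^(n) + Σ_{i=1}^{n+1} ξ(i)·θ̂·A^(i,n−i+1) = ξ(n)·θ̂. -/
lemma aux_vecMul_smulM {K : Type*} [Fintype K] (θ : K → ℝ) (a : ℝ) (M : Matrix K K ℝ) :
    Matrix.vecMul θ (a • M) = a • Matrix.vecMul θ M := by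
  ext k
  simp [Matrix.vecMul, dotProduct, Finset.mul_sum, mul_left_comm]

lemma aux_vecMul_sum {K : Type*} [Fintype K] (θ : K → ℝ) (s : Finset ℕ) (M : ℕ → Matrix K K ℝ) :
    Matrix.vecMul θ (∑ i ∈ s, M i) = ∑ i ∈ s, Matrix.vecMul θ (M i) := by
  classical
  induction s using Finset.induction_on with
  | empty => simp [Matrix.vecMul_zero]
  | insert _ _ h ih => simp [Finset.sum_insert h, Matrix.vecMul_add, ih]

lemma aux1 {K : Type*} [Fintype K] [DecidableEq K] (IW V : Matrix K K ℝ) (lam m : ℝ)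
    (hm : m ≠ 0) (hinv0 : IsUnit (lam • IW - V)) (hinvm : IsUnit ((lam + m) • IW - V)) :
    (lam • ((lam • IW - V)⁻¹ * IW)) * (m • (((lam + m) • IW - V)⁻¹ * IW)) +
      (lam / m) • (m • (((lam + m) • IW - V)⁻¹ * IW)) = lam • ((lam • IW - V)⁻¹ * IW) := by
  set E := (lam • IW - V)⁻¹ with hE
  set D := ((lam + m) • IW - V)⁻¹ with hD
  have hE1 : E * (lam • IW - V) = 1 :=
    Matrix.nonsing_inv_mul _ ((Matrix.isUnit_iff_isUnit_det _).1 hinv0)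
  have hD1 : ((lam + m) • IW - V) * D = 1 :=
    Matrix.mul_nonsing_inv _ ((Matrix.isUnit_iff_isUnit_det _).1 hinvm)
  have hsplit : (lam • IW - V) * D = 1 - m • (IW * D) := by
    have h : (lam + m) • IW - V = (lam • IW - V) + m • IW := by
      rw [add_smul]; abel
    rw [h, add_mul, smul_mul_assoc] at hD1
    linear_combination (norm := noncomm_ring) hD1
  have core : m • (E * IW * (D * IW)) + D * IW = E * IW := by
    have h2 : (lam • IW - V) * (D * IW) = IW - m • (IW * (D * IW)) := by
      rw [← mul_assoc, hsplit, sub_mul, one_mul, smul_mul_assoc, mul_assoc]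
    have h3 : E * IW = E * ((lam • IW - V) * (D * IW)) + m • (E * (IW * (D * IW))) := by
      rw [h2, mul_sub, mul_smul_comm, sub_add_cancel]
    conv_rhs => rw [h3]
    rw [← mul_assoc E, hE1, one_mul, ← mul_assoc E IW, add_comm]
  have e1 : (lam • (E * IW)) * (m • (D * IW)) = lam • (m • (E * IW * (D * IW))) := by
    rw [smul_mul_assoc, mul_smul_comm, mul_assoc]
  have e2 : (lam / m) • (m • (D * IW)) = lam • (D * IW) := by
    rw [smul_smul, div_mul_cancel₀ _ hm]
  rw [e1, e2, ← smul_add, core]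

lemma aux2 {K : Type*} [Fintype K] [DecidableEq K] (IW V : Matrix K K ℝ) (lam : ℝ)
    (mu : ℕ → ℝ) (hmu : ∀ i, 1 ≤ i → 0 < mu i)
    (hinv0 : IsUnit (lam • IW - V))
    (hinv : ∀ i, 1 ≤ i → IsUnit ((lam + mu i) • IW - V))
    (W : Matrix K K ℝ) (hW : W = lam • ((lam • IW - V)⁻¹ * IW))
    (U : ℕ → ℕ → Matrix K K ℝ)
    (hU0 : ∀ i, 1 ≤ i → U i 0 = mu i • (((lam + mu i) • IW - V)⁻¹ * IW))
    (hUs : ∀ i n, 1 ≤ i →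
      U i (n + 1) = ((lam + mu i) • IW - V)⁻¹ * (lam • IW) * U (i + 1) n) :
    ∀ n m, 1 ≤ m →
      W * U m n +
          ∑ j ∈ Finset.range (n + 1),
            (∏ l ∈ Finset.Ico m (m + j + 1), lam / mu l) • U (m + j) (n - j)
        = (∏ l ∈ Finset.Ico m (m + n), lam / mu l) • W := by
  have Id : ∀ m, 1 ≤ m → W * U m 0 + (lam / mu m) • U m 0 = W := by
    intro m hm
    rw [hW, hU0 m hm]
    exact aux1 IW V lam (mu m) (hmu m hm).ne' hinv0 (hinv m hm)
  intro n
  induction n with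
  | zero =>
    intro m hm
    simpa using Id m hm
  | succ n ih =>
    intro m hm
    set D := ((lam + mu m) • IW - V)⁻¹ with hD
    have hX : D * (lam • IW) = (lam / mu m) • U m 0 := by
      rw [hU0 m hm, mul_smul_comm, smul_smul, div_mul_cancel₀ _ (hmu m hm).ne']
    have keyX : W * (D * (lam • IW)) + (lam / mu m) • (D * (lam • IW))
        = (lam / mu m) • W := by
      rw [hX, mul_smul_comm, smul_smul]
      have h := congrArg (fun M : Matrix K K ℝ => (lam / mu m) • M) (Id m hm)
      simpa [smul_add, smul_smul] using h
    rw [Finset.sum_range_succ']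
    have hprod0 : (∏ l ∈ Finset.Ico m (m + 0 + 1), lam / mu l) = lam / mu m := by
      simp
    have hterm0 :
        (∏ l ∈ Finset.Ico m (m + 0 + 1), lam / mu l) • U (m + 0) (n + 1 - 0)
          = (lam / mu m) • (D * (lam • IW) * U (m + 1) n) := by
      rw [hprod0]
      simp only [Nat.add_zero, Nat.sub_zero]
      rw [hUs m n hm]
    have hterm : ∀ j, (∏ l ∈ Finset.Ico m (m + (j + 1) + 1), lam / mu l) •
          U (m + (j + 1)) (n + 1 - (j + 1))
        = (lam / mu m) • ((∏ l ∈ Finset.Ico (m + 1) (m + 1 + j + 1), lam / mu l) •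
          U (m + 1 + j) (n - j)) := by
      intro j
      have h1 : m + (j + 1) + 1 = m + 1 + j + 1 := by omega
      have h2 : m + (j + 1) = m + 1 + j := by omega
      have h3 : n + 1 - (j + 1) = n - j := by omega
      rw [h1, h2, h3, smul_smul,
        ← Finset.prod_eq_prod_Ico_succ_bot (by omega : m < m + 1 + j + 1) (fun l => lam / mu l)]
    rw [hterm0]
    rw [Finset.sum_congr rfl (fun j _ => hterm j), ← Finset.smul_sum]
    rw [hUs m n hm, ← mul_assoc]
    have e3 : W * (D * (lam • IW)) = (lam / mu m) • W - (lam / mu m) • (D * (lam • IW)) :=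
      eq_sub_of_add_eq keyX
    rw [e3, sub_mul, smul_mul_assoc, smul_mul_assoc]
    have cancel : ∀ (a b s r : Matrix K K ℝ), a + s = r → a - b + (s + b) = r := by
      intro a b s r h; rw [← h]; abel
    apply cancel
    rw [← smul_add, ih (m + 1) (by omega), smul_smul,
      ← Finset.prod_eq_prod_Ico_succ_bot (by omega : m < m + 1 + n) (fun l => lam / mu l),
      show m + 1 + n = m + (n + 1) from by omega]
theorem stmt_16 {K : Type*} [Fintype K] [DecidableEq K] [Nonempty K]
    (KW KB : Set K) [∀ k, Decidable (k ∈ KW)] (hKW : KW.Nonempty)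
    (hpart : ∀ k : K, k ∈ KW ↔ k ∉ KB)
    (IW : Matrix K K ℝ)
    (hIW : IW = Matrix.diagonal (fun k => if k ∈ KW then (1:ℝ) else 0))
    (V R : Matrix K K ℝ)
    (lam : ℝ) (hlam : 0 < lam)
    (mu : ℕ → ℝ) (hmu : ∀ i, 1 ≤ i → 0 < mu i)
    (hinv0 : IsUnit (lam • IW - V))
    (hinv : ∀ i, 1 ≤ i → IsUnit ((lam + mu i) • IW - V))
    (W : Matrix K K ℝ) (hW : W = lam • ((lam • IW - V)⁻¹ * IW))
    (U : ℕ → ℕ → Matrix K K ℝ)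
    (hU0 : ∀ i, 1 ≤ i → U i 0 = mu i • (((lam + mu i) • IW - V)⁻¹ * IW))
    (hUs : ∀ i n, 1 ≤ i →
      U i (n + 1) = ((lam + mu i) • IW - V)⁻¹ * (lam • IW) * U (i + 1) n)
    (A : ℕ → ℕ → Matrix K K ℝ) (hA : ∀ i n, A i n = U i n * R)
    (B : ℕ → Matrix K K ℝ) (hB : ∀ n, B n = W * U 1 n * R)
    (c : ℝ) (hc : 0 < c)
    (ξ : ℕ → ℝ) (hξ : ∀ n, ξ n = c * ∏ i ∈ Finset.Icc 1 n, lam / mu i)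
    (θhat : K → ℝ)
    (hθhat : Matrix.vecMul θhat (lam • ((lam • IW - V)⁻¹ * IW * R)) = θhat) :
    ∀ n : ℕ,
      Matrix.vecMul (ξ 0 • θhat) (B n) +
        ∑ i ∈ Finset.Icc 1 (n + 1), Matrix.vecMul (ξ i • θhat) (A i (n + 1 - i))
      = ξ n • θhat := by
  intro n
  have hT := aux2 IW V lam mu hmu hinv0 hinv W hW U hU0 hUs n 1 le_rfl
  have hT' : c • (W * U 1 n * R) + ∑ j ∈ Finset.range (n + 1),
      (c * ∏ l ∈ Finset.Ico 1 (1 + j + 1), lam / mu l) • (U (1 + j) (n - j) * R)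
      = (c * ∏ l ∈ Finset.Ico 1 (1 + n), lam / mu l) • (W * R) := by
    have h := congrArg (fun M => c • (M * R)) hT
    simp only [add_mul, Finset.sum_mul, smul_mul_assoc, smul_add, Finset.smul_sum,
      smul_smul] at h
    exact h
  have MI : ξ 0 • B n + ∑ i ∈ Finset.Icc 1 (n + 1), ξ i • A i (n + 1 - i)
      = ξ n • (W * R) := by
    rw [show Finset.Icc 1 (n + 1) = Finset.Ico 1 (n + 2) from (Finset.Ico_add_one_right_eq_Icc 1 (n + 1)).symm,
      Finset.sum_Ico_eq_sum_range]
    have hterm : ∀ j, ξ (1 + j) • A (1 + j) (n + 1 - (1 + j))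
        = (c * ∏ l ∈ Finset.Ico 1 (1 + j + 1), lam / mu l) • (U (1 + j) (n - j) * R) := by
      intro j
      rw [hξ, hA, show n + 1 - (1 + j) = n - j from by omega,
        show Finset.Icc 1 (1 + j) = Finset.Ico 1 (1 + j + 1) from
          (Finset.Ico_add_one_right_eq_Icc 1 (1 + j)).symm]
    rw [Finset.sum_congr rfl (fun j _ => hterm j), hξ 0, hB, hξ n,
      show Finset.Icc 1 n = Finset.Ico 1 (1 + n) from by
        rw [Nat.add_comm]; exact (Finset.Ico_add_one_right_eq_Icc 1 n).symm]
    simpa using hT'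
  have hWR : Matrix.vecMul θhat (W * R) = θhat := by
    rw [hW, smul_mul_assoc]
    exact hθhat
  have h2 := congrArg (fun M => Matrix.vecMul θhat M) MI
  simp only [Matrix.vecMul_add, aux_vecMul_sum, aux_vecMul_smulM] at h2
  rw [hWR] at h2
  simp only [Matrix.smul_vecMul]
  exact h2
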